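/- (Representer theorem) Let L : ℝ^n → ℝ be an arbitrary function and suppose f̂ ∈ H minimizes the functional M(f) := L(f(x_1), f(x_2), …, f(x_n)) + ‖f‖² over f ∈ H. Then f̂ lies in the span of k(x_1), …, k(x_n); that is, there exist coefficients α_1, …, α_n ∈ ℝ with f̂ = Σ_{i=1}^n α_i k(x_i). -/

import Mathlib

open scoped RealInnerProductSpace

/-- **Representer theorem.** If `f̂` minimizes
`M(f) = L(f(x₁), …, f(xₙ)) + ‖f‖²` over `f ∈ H`, then `f̂` lies in the span of
`k(x₁), …, k(xₙ)`: there exist `α₁, …, αₙ ∈ ℝ` with `f̂ = Σ αᵢ k(xᵢ)`. -/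
theorem representer_theorem
    {H : Type*} [NormedAddCommGroup H] [InnerProductSpace ℝ H]
    {Ω : Type*} (k : Ω → H) {n : ℕ} (x : Fin n → Ω)
    (G : Matrix (Fin n) (Fin n) ℝ)
    (hG : ∀ i j, G i j = ⟪k (x i), k (x j)⟫)
    (hGunit : IsUnit G.det)
    (L : (Fin n → ℝ) → ℝ) (fhat : H)
    (hmin : ∀ f : H,
      L (fun i => ⟪k (x i), fhat⟫) + ‖fhat‖ ^ 2 ≤
        L (fun i => ⟪k (x i), f⟫) + ‖f‖ ^ 2) :
    ∃ α : Fin n → ℝ, fhat = ∑ i, α i • k (x i) := by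
  set V : Submodule ℝ H := Submodule.span ℝ (Set.range fun i => k (x i)) with hV
  haveI : FiniteDimensional ℝ V := FiniteDimensional.span_of_finite ℝ (Set.finite_range _)
  set p : H := (Submodule.orthogonalProjectionOnto V fhat : H) with hp
  have hperp : fhat - p ∈ Vᗮ := Submodule.sub_starProjection_mem_orthogonal (K := V) fhat
  have hsame : ∀ i, ⟪k (x i), fhat⟫ = ⟪k (x i), p⟫ := by
    intro i
    have hmem : k (x i) ∈ V := Submodule.subset_span ⟨i, rfl⟩
    have h2 : ⟪k (x i), fhat - p⟫ = 0 := by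
      exact hperp (k (x i)) hmem
    rw [inner_sub_right] at h2
    linarith
  -- Pythagoras: ‖fhat‖² = ‖p‖² + ‖fhat - p‖²
  have hpyth : ‖fhat‖ ^ 2 = ‖p‖ ^ 2 + ‖fhat - p‖ ^ 2 := by
    have horth : ⟪p, fhat - p⟫ = 0 := by
      exact hperp p (Submodule.orthogonalProjectionOnto V fhat).2
    have := norm_add_sq_real p (fhat - p)
    simp only [horth, mul_zero, add_zero] at this
    have heq : p + (fhat - p) = fhat := by abel
    rw [heq] at this
    linarith
  have hle := hmin p
  have hsimp : (fun i => ⟪k (x i), fhat⟫) = fun i => ⟪k (x i), p⟫ := funext hsame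
  rw [hsimp] at hle
  have hnorm : ‖fhat‖ ^ 2 ≤ ‖p‖ ^ 2 := by linarith
  have hzero : fhat - p = 0 := by
    have : ‖fhat - p‖ ^ 2 ≤ 0 := by linarith
    have h0 : ‖fhat - p‖ = 0 := by nlinarith [norm_nonneg (fhat - p)]
    exact norm_eq_zero.mp h0
  have hfp : fhat = p := by rwa [sub_eq_zero] at hzero
  have hmem : fhat ∈ V := hfp ▸ (Submodule.orthogonalProjectionOnto V fhat).2
  obtain ⟨α, hα⟩ := (Submodule.mem_span_range_iff_exists_fun ℝ).mp hmem
  exact ⟨α, hα.symm⟩
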